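/- Let f(n) = 2^{s₂(n)} be the number of odd entries in the n-th row of Pascal's triangle. Then lim_{n→∞} ln(Var(f(N)))/ln(n) = ln(5/2)/ln(2), where Var(f(N)) = (1/n)∑_{k=0}^{n−1} f(k)² − ((1/n)∑_{k=0}^{n−1} f(k))². -/

import Mathlib

open Finset

lemma s_even (k : ℕ) : (Nat.digits 2 (2*k)).sum = (Nat.digits 2 k).sum := by
  rcases Nat.eq_zero_or_pos k with h | h
  · simp [h]
  · rw [Nat.digits_def' (by norm_num) (by omega)]
    simp [Nat.mul_div_cancel_left _ (by norm_num : 0 < 2), Nat.mul_mod_right]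

lemma s_odd (k : ℕ) : (Nat.digits 2 (2*k+1)).sum = (Nat.digits 2 k).sum + 1 := by
  rw [Nat.digits_def' (by norm_num) (by omega)]
  have h1 : (2*k+1) % 2 = 1 := by omega
  have h2 : (2*k+1) / 2 = k := by omega
  rw [h1, h2]
  simp [add_comm]

lemma sum_pow_double (x : ℝ) (N : ℕ) :
    ∑ k ∈ range (2*N), x^(Nat.digits 2 k).sum = (1+x) * ∑ k ∈ range N, x^(Nat.digits 2 k).sum := by
  induction N with
  | zero => simp
  | succ n ih =>
    have : 2*(n+1) = (2*n+1)+1 := by ring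
    rw [this, sum_range_succ, sum_range_succ, ih, s_odd, s_even, sum_range_succ]
    ring

lemma sum_pow_two_pow (x : ℝ) (m : ℕ) :
    ∑ k ∈ range (2^m), x^(Nat.digits 2 k).sum = (1+x)^m := by
  induction m with
  | zero => simp
  | succ n ih => rw [pow_succ, mul_comm _ 2, sum_pow_double, ih, pow_succ]; ring

noncomputable def Sf (n : ℕ) : ℝ := ∑ k ∈ range n, (2:ℝ)^(Nat.digits 2 k).sum
noncomputable def Tf (n : ℕ) : ℝ := ∑ k ∈ range n, ((2:ℝ)^(Nat.digits 2 k).sum)^2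

lemma S_pow (m : ℕ) : Sf (2^m) = 3^m := by
  have := sum_pow_two_pow 2 m; rw [Sf, this]; norm_num

lemma T_pow (m : ℕ) : Tf (2^m) = 5^m := by
  have h : ∀ k : ℕ, ((2:ℝ)^(Nat.digits 2 k).sum)^2 = (4:ℝ)^(Nat.digits 2 k).sum := by
    intro k; rw [← pow_mul, mul_comm, pow_mul]; norm_num
  rw [Tf]; simp_rw [h]; rw [sum_pow_two_pow]; norm_num

lemma S_mono : Monotone Sf := fun a b h =>
  Finset.sum_le_sum_of_subset_of_nonneg (Finset.range_subset_range.2 h) (by intros; positivity)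

lemma T_mono : Monotone Tf := fun a b h =>
  Finset.sum_le_sum_of_subset_of_nonneg (Finset.range_subset_range.2 h) (by intros; positivity)

lemma S_nonneg (n : ℕ) : 0 ≤ Sf n := Finset.sum_nonneg (by intros; positivity)

lemma pow_rpow_logb (m : ℕ) {y : ℝ} (hy : 0 < y) :
    ((2:ℝ)^m) ^ Real.logb 2 y = y ^ m := by
  rw [← Real.rpow_natCast 2 m, ← Real.rpow_mul (by norm_num), mul_comm,
    Real.rpow_mul (by norm_num), Real.rpow_logb (by norm_num) (by norm_num) hy,
    Real.rpow_natCast]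

lemma T_bounds {n : ℕ} (hn : 1 ≤ n) :
    (n:ℝ) ^ Real.logb 2 5 / 5 ≤ Tf n ∧ Tf n ≤ 5 * (n:ℝ) ^ Real.logb 2 5 := by
  set m := Nat.log 2 n with hm
  have h1 : (2:ℕ)^m ≤ n := Nat.pow_log_le_self 2 (by omega)
  have h2 : n < 2^(m+1) := Nat.lt_pow_succ_log_self (by norm_num) n
  have h1' : ((2:ℝ)^m) ≤ (n:ℝ) := by exact_mod_cast h1
  have h2' : (n:ℝ) ≤ (2:ℝ)^(m+1) := by exact_mod_cast h2.le
  have hα : (0:ℝ) ≤ Real.logb 2 5 := (Real.logb_pos one_lt_two (by norm_num)).le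
  have e1 : ((2:ℝ)^m) ^ Real.logb 2 5 = 5^m := pow_rpow_logb m (by norm_num)
  have e2 : ((2:ℝ)^(m+1)) ^ Real.logb 2 5 = 5^(m+1) := pow_rpow_logb (m+1) (by norm_num)
  constructor
  · have hr : (n:ℝ) ^ Real.logb 2 5 ≤ 5^(m+1) := by
      rw [← e2]; exact Real.rpow_le_rpow (by positivity) h2' hα
    have hT : (5:ℝ)^m ≤ Tf n := by rw [← T_pow]; exact T_mono h1
    calc (n:ℝ) ^ Real.logb 2 5 / 5 ≤ (5:ℝ)^(m+1) / 5 := by gcongr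
    _ = 5^m := by rw [pow_succ]; field_simp
    _ ≤ Tf n := hT
  · have hr : (5:ℝ)^m ≤ (n:ℝ) ^ Real.logb 2 5 := by
      rw [← e1]; exact Real.rpow_le_rpow (by positivity) h1' hα
    calc Tf n ≤ Tf (2^(m+1)) := T_mono h2.le
    _ = 5^(m+1) := T_pow _
    _ = 5 * 5^m := by ring
    _ ≤ 5 * (n:ℝ) ^ Real.logb 2 5 := by linarith

lemma S_bound {n : ℕ} (hn : 1 ≤ n) : Sf n ≤ 3 * (n:ℝ) ^ Real.logb 2 3 := by
  set m := Nat.log 2 n with hm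
  have h1 : (2:ℕ)^m ≤ n := Nat.pow_log_le_self 2 (by omega)
  have h2 : n < 2^(m+1) := Nat.lt_pow_succ_log_self (by norm_num) n
  have h1' : ((2:ℝ)^m) ≤ (n:ℝ) := by exact_mod_cast h1
  have hβ : (0:ℝ) ≤ Real.logb 2 3 := (Real.logb_pos one_lt_two (by norm_num)).le
  have e1 : ((2:ℝ)^m) ^ Real.logb 2 3 = 3^m := pow_rpow_logb m (by norm_num)
  have hr : (3:ℝ)^m ≤ (n:ℝ) ^ Real.logb 2 3 := by
    rw [← e1]; exact Real.rpow_le_rpow (by positivity) h1' hβ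
  calc Sf n ≤ Sf (2^(m+1)) := S_mono h2.le
  _ = 3^(m+1) := S_pow _
  _ = 3 * 3^m := by ring
  _ ≤ 3 * (n:ℝ) ^ Real.logb 2 3 := by linarith

noncomputable def Vf (n : ℕ) : ℝ := (1/(n:ℝ)) * Tf n - ((1/(n:ℝ)) * Sf n)^2

lemma V_upper {n : ℕ} (hn : 1 ≤ n) : Vf n ≤ 5 * (n:ℝ) ^ (Real.logb 2 5 - 1) := by
  have hx : (0:ℝ) < n := by exact_mod_cast hn
  have hT := (T_bounds hn).2
  have h1 : (n:ℝ) ^ (Real.logb 2 5 - 1) = (n:ℝ) ^ Real.logb 2 5 / n :=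
    Real.rpow_sub_one hx.ne' _
  have h2 : ((1/(n:ℝ)) * Sf n)^2 ≥ 0 := sq_nonneg _
  have : Vf n ≤ (1/(n:ℝ)) * Tf n := by rw [Vf]; linarith
  calc Vf n ≤ (1/(n:ℝ)) * Tf n := this
  _ ≤ (1/(n:ℝ)) * (5 * (n:ℝ) ^ Real.logb 2 5) := by
      apply mul_le_mul_of_nonneg_left hT (by positivity)
  _ = 5 * (n:ℝ) ^ (Real.logb 2 5 - 1) := by rw [h1]; ring

lemma V_lower {n : ℕ} (hn : 1 ≤ n)
    (h90 : (90:ℝ) ≤ (n:ℝ) ^ (Real.logb 2 5 + 1 - 2 * Real.logb 2 3)) :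
    (1/10) * (n:ℝ) ^ (Real.logb 2 5 - 1) ≤ Vf n := by
  have hx : (0:ℝ) < n := by exact_mod_cast hn
  set x : ℝ := (n:ℝ)
  set α := Real.logb 2 5
  set β := Real.logb 2 3
  set A := x ^ α with hA
  set B := x ^ β with hB
  have hA0 : 0 < A := Real.rpow_pos_of_pos hx _
  have hB0 : 0 < B := Real.rpow_pos_of_pos hx _
  have hT := (T_bounds hn).1
  have hS := S_bound hn
  have hS0 := S_nonneg n
  have h1 : x ^ (α - 1) = A / x := Real.rpow_sub_one hx.ne' _
  have key : x ^ (α + 1 - 2*β) * B^2 = A * x := by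
    rw [hB, ← Real.rpow_natCast (x ^ β) 2, ← Real.rpow_mul hx.le,
      ← Real.rpow_add hx, hA, ← Real.rpow_add_one hx.ne' α]
    congr 1
    push_cast
    ring
  have step1 : (1/x) * (A/5) - ((1/x) * (3*B))^2 ≤ Vf n := by
    rw [Vf]
    have hs : ((1/x) * Sf n)^2 ≤ ((1/x) * (3*B))^2 := by
      apply pow_le_pow_left₀ (by positivity)
      exact mul_le_mul_of_nonneg_left hS (by positivity)
    have ht : (1/x) * (A/5) ≤ (1/x) * Tf n :=
      mul_le_mul_of_nonneg_left hT (by positivity)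
    linarith
  have step2 : (1/10) * x ^ (α - 1) ≤ (1/x) * (A/5) - ((1/x) * (3*B))^2 := by
    rw [h1]
    have hgB : 90 * B^2 ≤ A * x := by
      rw [← key]
      have : 90 * B^2 ≤ x ^ (α + 1 - 2*β) * B^2 := by nlinarith
      linarith
    have hx2 : (0:ℝ) < x^2 := by positivity
    have expand : ((1/x) * (3*B))^2 = 9 * B^2 / x^2 := by field_simp; ring
    have e2 : (1/x) * (A/5) = 2 * ((1/10) * (A/x)) := by ring
    have h9 : 9 * B^2 / x^2 ≤ (1/10) * (A/x) := by
      rw [div_le_iff₀ hx2]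
      have e3 : (1/10) * (A/x) * x^2 = A * x / 10 := by
        field_simp
      rw [e3]
      linarith
    rw [expand, e2]
    linarith
  linarith

lemma gamma_pos : 0 < Real.logb 2 5 + 1 - 2 * Real.logb 2 3 := by
  have h10 : Real.logb 2 10 = Real.logb 2 5 + 1 := by
    rw [show (10:ℝ) = 5*2 by norm_num, Real.logb_mul (by norm_num) (by norm_num),
      Real.logb_self_eq_one (by norm_num)]
  have h9 : Real.logb 2 9 = 2 * Real.logb 2 3 := by
    rw [show (9:ℝ) = 3^2 by norm_num, Real.logb_pow]
    push_cast; ring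
  have hlt : Real.logb 2 9 < Real.logb 2 10 :=
    Real.logb_lt_logb (by norm_num) (by norm_num) (by norm_num)
  linarith

lemma target_eq : Real.log (5/2) / Real.log 2 = Real.logb 2 5 - 1 := by
  have h2 : Real.log 2 ≠ 0 := Real.log_ne_zero_of_pos_of_ne_one (by norm_num) (by norm_num)
  rw [Real.log_div (by norm_num) (by norm_num), Real.logb]
  field_simp

/-- With `f k = 2^{s₂ k}` the number of odd entries in the `k`-th row of Pascal's triangle,
and `Var(f(N)) = (1/n)∑_{k<n} f(k)² − ((1/n)∑_{k<n} f(k))²` the variance of `f` under the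
uniform distribution on `{0,…,n−1}`, we have `ln(Var(f(N)))/ln n → ln(5/2)/ln 2`. -/
theorem binomial_average_dispersion :
    Filter.Tendsto
      (fun n : ℕ =>
        Real.log
            ((1 / (n : ℝ)) * (∑ k ∈ Finset.range n, ((2 : ℝ) ^ (Nat.digits 2 k).sum) ^ 2)
              - ((1 / (n : ℝ)) * ∑ k ∈ Finset.range n, (2 : ℝ) ^ (Nat.digits 2 k).sum) ^ 2)
          / Real.log n)
      Filter.atTop (nhds (Real.log (5 / 2) / Real.log 2)) := by
  set c : ℝ := Real.logb 2 5 - 1 with hc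
  have hfun : ∀ n : ℕ,
      Real.log
            ((1 / (n : ℝ)) * (∑ k ∈ Finset.range n, ((2 : ℝ) ^ (Nat.digits 2 k).sum) ^ 2)
              - ((1 / (n : ℝ)) * ∑ k ∈ Finset.range n, (2 : ℝ) ^ (Nat.digits 2 k).sum) ^ 2)
          / Real.log n = Real.log (Vf n) / Real.log n := by
    intro n; rfl
  simp only [hfun, target_eq, ← hc]
  have hln : Filter.Tendsto (fun n : ℕ => Real.log n) Filter.atTop Filter.atTop :=
    Real.tendsto_log_atTop.comp tendsto_natCast_atTop_atTop
  have hlo : Filter.Tendsto (fun n : ℕ => Real.log (1/10) / Real.log n + c)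
      Filter.atTop (nhds c) := by
    have := (tendsto_const_nhds (x := Real.log (1/10)) (f := Filter.atTop (α := ℕ))).div_atTop hln
    simpa using this.add (tendsto_const_nhds (x := c))
  have hhi : Filter.Tendsto (fun n : ℕ => Real.log 5 / Real.log n + c)
      Filter.atTop (nhds c) := by
    have := (tendsto_const_nhds (x := Real.log 5) (f := Filter.atTop (α := ℕ))).div_atTop hln
    simpa using this.add (tendsto_const_nhds (x := c))
  have h90 : ∀ᶠ n : ℕ in Filter.atTop,
      (90:ℝ) ≤ (n:ℝ) ^ (Real.logb 2 5 + 1 - 2 * Real.logb 2 3) :=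
    ((tendsto_rpow_atTop gamma_pos).comp tendsto_natCast_atTop_atTop).eventually_ge_atTop 90
  apply tendsto_of_tendsto_of_tendsto_of_le_of_le' hlo hhi
  · filter_upwards [h90, Filter.eventually_ge_atTop 2] with n h90n h2n
    have hn1 : 1 ≤ n := by omega
    have hx : (1:ℝ) < n := by exact_mod_cast h2n
    have hlogx : 0 < Real.log n := Real.log_pos hx
    have hL := V_lower hn1 h90n
    have hrp : (0:ℝ) < (n:ℝ) ^ c := Real.rpow_pos_of_pos (by linarith) _
    have hV0 : 0 < Vf n := lt_of_lt_of_le (by positivity) hL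
    have hlog : Real.log ((1/10) * (n:ℝ) ^ c) ≤ Real.log (Vf n) :=
      Real.log_le_log (by positivity) hL
    have hexp : Real.log ((1/10) * (n:ℝ) ^ c) = Real.log (1/10) + c * Real.log n := by
      rw [Real.log_mul (by norm_num) hrp.ne', Real.log_rpow (by linarith)]
    have : (Real.log (1/10) + c * Real.log n) / Real.log n
        = Real.log (1/10) / Real.log n + c := by field_simp
    rw [← this]
    apply div_le_div_of_nonneg_right _ hlogx.le
    · rw [← hexp]; exact hlog
  · filter_upwards [h90, Filter.eventually_ge_atTop 2] with n h90n h2n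
    have hn1 : 1 ≤ n := by omega
    have hx : (1:ℝ) < n := by exact_mod_cast h2n
    have hlogx : 0 < Real.log n := Real.log_pos hx
    have hL := V_lower hn1 h90n
    have hU := V_upper hn1
    have hrp : (0:ℝ) < (n:ℝ) ^ c := Real.rpow_pos_of_pos (by linarith) _
    have hV0 : 0 < Vf n := lt_of_lt_of_le (by positivity) hL
    have hlog : Real.log (Vf n) ≤ Real.log (5 * (n:ℝ) ^ c) :=
      Real.log_le_log hV0 hU
    have hexp : Real.log (5 * (n:ℝ) ^ c) = Real.log 5 + c * Real.log n := by
      rw [Real.log_mul (by norm_num) hrp.ne', Real.log_rpow (by linarith)]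
    have : (Real.log 5 + c * Real.log n) / Real.log n
        = Real.log 5 / Real.log n + c := by field_simp
    rw [← this]
    apply div_le_div_of_nonneg_right _ hlogx.le
    rw [← hexp]
    exact hlog
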